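/- Let θ > 0, n, N ∈ ℕ, ε > 0. Let Φ : ℝ → ℝ^{n×n} be continuous with Φ(t) invertible for every t and satisfying Φ(t+θ) = Φ(t)·Φ(θ) for all t ≥ 0. Let Γ : ℝ → ℝ^{n×N} be continuous and θ-periodic, i.e., Γ(t+θ) = Γ(t) for all t. Suppose the real symmetric n×n matrix Σ₀ satisfies the discrete-type Lyapunov equation Φ(θ) Σ₀ Φ(θ)ᵀ − Σ₀ + ε ∫₀^θ (Φ(θ)Φ(s)⁻¹Γ(s)) (Φ(θ)Φ(s)⁻¹Γ(s))ᵀ ds = O. Define Σ(t) = Φ(t) [ Σ₀ + ε ∫₀^t (Φ(s)⁻¹Γ(s)) (Φ(s)⁻¹Γ(s))ᵀ ds ] Φ(t)ᵀ. Then Σ(t+θ) = Σ(t) for all t ≥ 0. -/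
import Mathlib


open Matrix MeasureTheory

/-- The entrywise (interval) integral of a matrix-valued function. -/
noncomputable def entryIntegral {n N : ℕ} (f : ℝ → Matrix (Fin n) (Fin N) ℝ) (a b : ℝ) :
    Matrix (Fin n) (Fin N) ℝ :=
  Matrix.of fun i j => ∫ s in a..b, f s i j

lemma entryIntegral_conj {n : ℕ} (f : ℝ → Matrix (Fin n) (Fin n) ℝ) (a b : ℝ)
    (hf : ∀ i j, IntervalIntegrable (fun s => f s i j) volume a b)
    (A B : Matrix (Fin n) (Fin n) ℝ) :
    entryIntegral (fun s => A * f s * B) a b = A * entryIntegral f a b * B := by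
  ext i j
  have h2 : (A * entryIntegral f a b * B) i j
      = ∑ l, ∑ k, A i k * (∫ s in a..b, f s k l) * B l j := by
    simp [Matrix.mul_apply, Finset.sum_mul, entryIntegral, mul_assoc]
  have h1 : (entryIntegral (fun s => A * f s * B) a b) i j
      = ∫ s in a..b, ∑ l, ∑ k, A i k * f s k l * B l j := by
    simp only [entryIntegral, Matrix.of_apply]
    refine intervalIntegral.integral_congr fun s _ => ?_
    simp [Matrix.mul_apply, Finset.sum_mul]
  have hint : ∀ l : Fin n,
      IntervalIntegrable (fun s => ∑ k, A i k * f s k l * B l j) volume a b := by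
    intro l
    have := IntervalIntegrable.sum (μ := volume) (a := a) (b := b) Finset.univ
      (f := fun k (s : ℝ) => A i k * f s k l * B l j)
      (fun k _ => ((hf k l).const_mul _).mul_const _)
    rwa [show (∑ k : Fin n, fun s : ℝ => A i k * f s k l * B l j)
        = fun s : ℝ => ∑ k : Fin n, A i k * f s k l * B l j from
      funext fun s => by simp] at this
  rw [h1, h2]
  refine (intervalIntegral.integral_finset_sum (fun l (_ : l ∈ Finset.univ) => hint l)).trans ?_
  refine Finset.sum_congr rfl fun l _ => ?_
  refine (intervalIntegral.integral_finset_sum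
      (fun k (_ : k ∈ Finset.univ) => ((hf k l).const_mul _).mul_const _)).trans ?_
  refine Finset.sum_congr rfl fun k _ => ?_
  rw [intervalIntegral.integral_mul_const, intervalIntegral.integral_const_mul]

/-- Let `Φ` be a continuous family of invertible matrices with
`Φ(t+θ) = Φ(t) Φ(θ)` for `t ≥ 0`, `Γ` continuous and `θ`-periodic, and let the symmetric
matrix `Σ₀` solve the discrete-type Lyapunov equation
`Φ(θ) Σ₀ Φ(θ)ᵀ - Σ₀ + ε ∫₀^θ (Φ(θ)Φ(s)⁻¹Γ(s))(Φ(θ)Φ(s)⁻¹Γ(s))ᵀ ds = 0`. Then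
`Σ(t) = Φ(t)[Σ₀ + ε ∫₀^t (Φ(s)⁻¹Γ(s))(Φ(s)⁻¹Γ(s))ᵀ ds]Φ(t)ᵀ` is `θ`-periodic on `t ≥ 0`. -/
theorem periodic_covariance_of_lyapunov {n N : ℕ} (θ ε : ℝ) (hθ : 0 < θ) (hε : 0 < ε)
    (Φ : ℝ → Matrix (Fin n) (Fin n) ℝ) (Γ : ℝ → Matrix (Fin n) (Fin N) ℝ)
    (hΦcont : Continuous Φ) (hΦinv : ∀ t : ℝ, IsUnit (Φ t).det)
    (hΦmul : ∀ t : ℝ, 0 ≤ t → Φ (t + θ) = Φ t * Φ θ)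
    (hΓcont : Continuous Γ) (hΓper : ∀ t : ℝ, Γ (t + θ) = Γ t)
    (S0 : Matrix (Fin n) (Fin n) ℝ) (hS0symm : S0.IsSymm)
    (hLyap : Φ θ * S0 * (Φ θ)ᵀ - S0 +
      ε • entryIntegral
        (fun s => (Φ θ * (Φ s)⁻¹ * Γ s) * (Φ θ * (Φ s)⁻¹ * Γ s)ᵀ) 0 θ = 0)
    (S : ℝ → Matrix (Fin n) (Fin n) ℝ)
    (hS : ∀ t : ℝ, S t = Φ t *
      (S0 + ε • entryIntegral (fun s => ((Φ s)⁻¹ * Γ s) * ((Φ s)⁻¹ * Γ s)ᵀ) 0 t) * (Φ t)ᵀ) :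
    ∀ t : ℝ, 0 ≤ t → S (t + θ) = S t := by
  set F : ℝ → Matrix (Fin n) (Fin n) ℝ :=
    fun s => ((Φ s)⁻¹ * Γ s) * ((Φ s)⁻¹ * Γ s)ᵀ with hF
  -- continuity of the inverse
  have hΦinvcont : Continuous fun s => (Φ s)⁻¹ := by
    have heq : (fun s => (Φ s)⁻¹) = fun s => ((Φ s).det)⁻¹ • (Φ s).adjugate := by
      funext s
      rw [Matrix.inv_def, Ring.inverse_eq_inv]
    rw [heq]
    exact (hΦcont.matrix_det.inv₀ fun s =>
      (isUnit_iff_ne_zero.mp (hΦinv s))).smul hΦcont.matrix_adjugate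
  have hFcont : Continuous F :=
    (hΦinvcont.matrix_mul hΓcont).matrix_mul (hΦinvcont.matrix_mul hΓcont).matrix_transpose
  have hFint : ∀ (a b : ℝ) (i j : Fin n),
      IntervalIntegrable (fun s => F s i j) volume a b := by
    intro a b i j
    exact (((continuous_apply j).comp ((continuous_apply i).comp hFcont))).intervalIntegrable a b
  have hunit : IsUnit (Φ θ) := (Φ θ).isUnit_iff_isUnit_det.mpr (hΦinv θ)
  have hinv1 : Φ θ * (Φ θ)⁻¹ = 1 := Matrix.mul_nonsing_inv _ (hΦinv θ)
  have hinv1T : ((Φ θ)⁻¹)ᵀ * (Φ θ)ᵀ = 1 := by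
    rw [← Matrix.transpose_mul, hinv1, Matrix.transpose_one]
  intro t ht
  -- Lyapunov rewritten
  have hLyapθ : Φ θ * S0 * (Φ θ)ᵀ + ε • (Φ θ * entryIntegral F 0 θ * (Φ θ)ᵀ) = S0 := by
    have hEq : entryIntegral
        (fun s => (Φ θ * (Φ s)⁻¹ * Γ s) * (Φ θ * (Φ s)⁻¹ * Γ s)ᵀ) 0 θ
        = Φ θ * entryIntegral F 0 θ * (Φ θ)ᵀ := by
      rw [← entryIntegral_conj F 0 θ (hFint 0 θ) (Φ θ) (Φ θ)ᵀ]
      congr 1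
      funext s
      simp only [hF, Matrix.transpose_mul, Matrix.mul_assoc]
    rw [hEq] at hLyap
    linear_combination (norm := abel) hLyap
  -- split the integral
  have hsplit : entryIntegral F 0 (t + θ)
      = entryIntegral F 0 θ + (Φ θ)⁻¹ * entryIntegral F 0 t * ((Φ θ)⁻¹)ᵀ := by
    have h1 : entryIntegral F 0 (t + θ) = entryIntegral F 0 θ + entryIntegral F θ (t + θ) := by
      ext i j
      simp only [entryIntegral, Matrix.of_apply, Matrix.add_apply]
      rw [← intervalIntegral.integral_add_adjacent_intervals (hFint 0 θ i j) (hFint θ (t+θ) i j)]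
    have h2 : entryIntegral F θ (t + θ) = entryIntegral (fun s => F (s + θ)) 0 t := by
      ext i j
      simp only [entryIntegral, Matrix.of_apply]
      rw [intervalIntegral.integral_comp_add_right (fun s => F s i j), zero_add]
    have h3 : entryIntegral (fun s => F (s + θ)) 0 t
        = entryIntegral (fun s => (Φ θ)⁻¹ * F s * ((Φ θ)⁻¹)ᵀ) 0 t := by
      ext i j
      simp only [entryIntegral, Matrix.of_apply]
      refine intervalIntegral.integral_congr fun s hs => ?_
      have hs0 : 0 ≤ s := by
        rw [Set.uIcc_of_le ht] at hs
        exact hs.1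
      have : F (s + θ) = (Φ θ)⁻¹ * F s * ((Φ θ)⁻¹)ᵀ := by
        simp only [hF, hΦmul s hs0, hΓper s, Matrix.mul_inv_rev, Matrix.transpose_mul,
          Matrix.mul_assoc]
      rw [this]
    rw [h1, h2, h3, entryIntegral_conj F 0 t (hFint 0 t)]
  -- final computation
  rw [hS, hS, hΦmul t ht, hsplit]
  have key : Φ θ * (S0 + ε • (entryIntegral F 0 θ + (Φ θ)⁻¹ * entryIntegral F 0 t * ((Φ θ)⁻¹)ᵀ))
      * (Φ θ)ᵀ = S0 + ε • entryIntegral F 0 t := by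
    have expand : Φ θ * (S0 + ε • (entryIntegral F 0 θ +
          (Φ θ)⁻¹ * entryIntegral F 0 t * ((Φ θ)⁻¹)ᵀ)) * (Φ θ)ᵀ
        = Φ θ * S0 * (Φ θ)ᵀ + ε • (Φ θ * entryIntegral F 0 θ * (Φ θ)ᵀ)
          + ε • ((Φ θ * (Φ θ)⁻¹) * entryIntegral F 0 t * (((Φ θ)⁻¹)ᵀ * (Φ θ)ᵀ)) := by
      simp only [Matrix.mul_add, Matrix.add_mul, smul_add, Matrix.mul_smul, Matrix.smul_mul,
        Matrix.mul_assoc, add_assoc]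
    rw [expand, hinv1, hinv1T, Matrix.one_mul, Matrix.mul_one, hLyapθ]
  calc Φ t * Φ θ * (S0 + ε • (entryIntegral F 0 θ +
          (Φ θ)⁻¹ * entryIntegral F 0 t * ((Φ θ)⁻¹)ᵀ)) * (Φ t * Φ θ)ᵀ
      = Φ t * (Φ θ * (S0 + ε • (entryIntegral F 0 θ +
          (Φ θ)⁻¹ * entryIntegral F 0 t * ((Φ θ)⁻¹)ᵀ)) * (Φ θ)ᵀ) * (Φ t)ᵀ := by
        simp only [Matrix.transpose_mul, Matrix.mul_assoc]
    _ = Φ t * (S0 + ε • entryIntegral F 0 t) * (Φ t)ᵀ := by rw [key]
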